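/- Let F be a finitely generated free group and φ : F → F a group endomorphism. Then there exists a positive integer K such that ker(φ^k) = ker(φ^K) for all k ≥ K; consequently the union ⋃_{k≥1} ker(φ^k) (equivalently, the supremum ⨆_k ker(φ^k)) equals ker(φ^K). -/

import Mathlib

open Function

namespace StabAux

variable {α : Type*} [DecidableEq α]

/-- reduced words have no adjacent cancelling pair -/
lemma toWord_no_adj (w : FreeGroup α) {i : ℕ} {x : α} {b : Bool}
    (h1 : w.toWord[i]? = some (x, b)) (h2 : w.toWord[i + 1]? = some (x, !b)) : False := by
  set L := w.toWord with hL
  have hred : FreeGroup.reduce L = L := w.reduce_toWord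
  obtain ⟨hi2, h2'⟩ := List.getElem?_eq_some_iff.mp h2
  obtain ⟨hi1, h1'⟩ := List.getElem?_eq_some_iff.mp h1
  have hdec : L = L.take i ++ (x, b) :: (x, !b) :: L.drop (i + 2) := by
    conv_lhs => rw [← List.take_append_drop i L]
    rw [List.drop_eq_getElem_cons hi1, List.drop_eq_getElem_cons hi2, h1', h2']
  exact FreeGroup.reduce.not (hred.trans hdec)

lemma rev_no_adj (w : FreeGroup α) {i : ℕ} {x : α} {b : Bool}
    (h1 : w.toWord.reverse[i]? = some (x, b)) (h2 : w.toWord.reverse[i + 1]? = some (x, !b)) :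
    False := by
  set L := w.toWord with hL
  have hi2 : i + 1 < L.length := by
    have := (List.getElem?_eq_some_iff.mp h2).1
    simpa using this
  have e1 : L.reverse[i]? = L[L.length - 1 - i]? := List.getElem?_reverse (by omega)
  have e2 : L.reverse[i+1]? = L[L.length - 1 - (i+1)]? := List.getElem?_reverse (by omega)
  have hj : L.length - 1 - i = (L.length - 1 - (i+1)) + 1 := by omega
  apply toWord_no_adj w (i := L.length - 1 - (i+1)) (x := x) (b := !b)
  · rw [← e2]; exact h2
  · rw [← hj, ← e1, h1, Bool.not_not]


variable {α : Type*} [DecidableEq α]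

lemma getElem?_lt {M : List (α × Bool)} {i : ℕ} {c : α × Bool} (h : M[i]? = some c) :
    i < M.length := (List.getElem?_eq_some_iff.mp h).1

/-- permutations realizing the position moves of each letter along a reduced word -/
lemma exists_perm (M : List (α × Bool))
    (hM : ∀ (i : ℕ) (x : α) (b : Bool), M[i]? = some (x, b) → M[i + 1]? = some (x, !b) → False) :
    ∃ f : α → Equiv.Perm (Fin (M.length + 1)),
      (∀ (a : α) (i : ℕ) (hi : i < M.length + 1) (hi1 : i + 1 < M.length + 1),
        M[i]? = some (a, true) → f a ⟨i, hi⟩ = ⟨i + 1, hi1⟩) ∧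
      (∀ (a : α) (i : ℕ) (hi : i < M.length + 1) (hi1 : i + 1 < M.length + 1),
        M[i]? = some (a, false) → f a ⟨i + 1, hi1⟩ = ⟨i, hi⟩) := by
  classical
  set n := M.length with hn
  set p : α → Fin (n+1) → Prop := fun a i =>
    M[(i : ℕ)]? = some (a, true) ∨ ∃ j : ℕ, (i : ℕ) = j + 1 ∧ M[j]? = some (a, false) with hp
  set q : α → Fin (n+1) → Prop := fun a i =>
    M[(i : ℕ)]? = some (a, false) ∨ ∃ j : ℕ, (i : ℕ) = j + 1 ∧ M[j]? = some (a, true) with hq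
  set v : α → ℕ → ℕ := fun a i => if M[i]? = some (a, true) then i + 1 else i - 1 with hv
  have hv_up : ∀ a i, M[i]? = some (a, true) → v a i = i + 1 := fun a i h => if_pos h
  have hv_dn : ∀ a i, ¬ M[i]? = some (a, true) → v a i = i - 1 := fun a i h => if_neg h
  have hvlt : ∀ (a : α) (x : {i : Fin (n+1) // p a i}), v a (x.1 : ℕ) < n + 1 := by
    rintro a ⟨i, hi⟩
    by_cases h : M[(i : ℕ)]? = some (a, true)
    · rw [hv_up a _ h]; have := getElem?_lt h; omega
    · rw [hv_dn a _ h]; have := i.2; omega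
  have hqmem : ∀ (a : α) (x : {i : Fin (n+1) // p a i}), q a ⟨v a (x.1 : ℕ), hvlt a x⟩ := by
    rintro a ⟨i, hi⟩
    by_cases h : M[(i : ℕ)]? = some (a, true)
    · refine Or.inr ⟨(i : ℕ), ?_, h⟩
      show v a (i : ℕ) = (i : ℕ) + 1
      exact hv_up a _ h
    · obtain ⟨j, hj1, hj2⟩ := hi.resolve_left h
      refine Or.inl ?_
      show M[(v a (i : ℕ))]? = some (a, false)
      rw [hv_dn a _ h, hj1]
      simpa using hj2
  obtain ⟨tf, tf_spec⟩ : ∃ tf : ∀ a : α, {i : Fin (n+1) // p a i} → {i : Fin (n+1) // q a i},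
      ∀ a x, ((tf a x).1 : ℕ) = v a (x.1 : ℕ) :=
    ⟨fun a x => ⟨⟨v a (x.1 : ℕ), hvlt a x⟩, hqmem a x⟩, fun a x => rfl⟩
  have hbij : ∀ a, Bijective (tf a) := by
    intro a
    constructor
    · rintro ⟨i, hi⟩ ⟨i', hi'⟩ hval
      have e1 : ((tf a ⟨i, hi⟩).1 : ℕ) = v a (i : ℕ) := tf_spec a ⟨i, hi⟩
      have e2 : ((tf a ⟨i', hi'⟩).1 : ℕ) = v a (i' : ℕ) := tf_spec a ⟨i', hi'⟩
      have hveq : v a (i : ℕ) = v a (i' : ℕ) := by rw [← e1, ← e2, hval]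
      by_cases h : M[(i : ℕ)]? = some (a, true) <;>
        by_cases h' : M[(i' : ℕ)]? = some (a, true)
      · rw [hv_up a _ h, hv_up a _ h'] at hveq
        exact Subtype.ext (Fin.ext (show (i : ℕ) = (i' : ℕ) by omega))
      · rw [hv_up a _ h, hv_dn a _ h'] at hveq
        obtain ⟨j', hj1, hj2⟩ := hi'.resolve_left h'
        exfalso
        refine hM (i : ℕ) a true h ?_
        have : j' = (i : ℕ) + 1 := by omega
        rw [← this]; simpa using hj2
      · rw [hv_dn a _ h, hv_up a _ h'] at hveq
        obtain ⟨j, hj1, hj2⟩ := hi.resolve_left h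
        exfalso
        refine hM (i' : ℕ) a true h' ?_
        have : j = (i' : ℕ) + 1 := by omega
        rw [← this]; simpa using hj2
      · rw [hv_dn a _ h, hv_dn a _ h'] at hveq
        obtain ⟨j, hj1, hj2⟩ := hi.resolve_left h
        obtain ⟨j', hj1', hj2'⟩ := hi'.resolve_left h'
        exact Subtype.ext (Fin.ext (show (i : ℕ) = (i' : ℕ) by omega))
    · rintro ⟨⟨i, hilt⟩, hqi⟩
      rcases hqi with hfa | ⟨j, hj1, hj2⟩
      · have hlt : i < n := getElem?_lt hfa
        have hnot : ¬ M[i + 1]? = some (a, true) := fun hcon => hM i a false hfa hcon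
        refine ⟨⟨⟨i + 1, by omega⟩, Or.inr ⟨i, rfl, hfa⟩⟩, ?_⟩
        apply Subtype.ext; apply Fin.ext
        show ((tf a _).1 : ℕ) = i
        rw [tf_spec, hv_dn a _ hnot]
        omega
      · have hlt : j < n := getElem?_lt hj2
        have hj1' : i = j + 1 := hj1
        refine ⟨⟨⟨j, by omega⟩, Or.inl hj2⟩, ?_⟩
        apply Subtype.ext; apply Fin.ext
        show ((tf a _).1 : ℕ) = i
        rw [tf_spec, hv_up a _ hj2]
        omega
  refine ⟨fun a => (Equiv.ofBijective _ (hbij a)).extendSubtype, ?_, ?_⟩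
  · intro a i hi hi1 h
    have hpm : p a ⟨i, hi⟩ := Or.inl h
    rw [Equiv.extendSubtype_apply_of_mem _ _ hpm]
    apply Fin.ext
    show ((tf a _).1 : ℕ) = i + 1
    rw [tf_spec, hv_up a _ h]
  · intro a i hi hi1 h
    have hpm : p a ⟨i + 1, hi1⟩ := Or.inr ⟨i, rfl, h⟩
    rw [Equiv.extendSubtype_apply_of_mem _ _ hpm]
    have hnot : ¬ M[i + 1]? = some (a, true) := fun hcon => hM i a false h hcon
    apply Fin.ext
    show ((tf a _).1 : ℕ) = i
    rw [tf_spec, hv_dn a _ hnot]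
    omega


lemma key_eval {α : Type*} [DecidableEq α] (L : List (α × Bool))
    (f : α → Equiv.Perm (Fin (L.reverse.length + 1)))
    (hup : ∀ (a : α) (i : ℕ) (hi : i < L.reverse.length + 1) (hi1 : i + 1 < L.reverse.length + 1),
        L.reverse[i]? = some (a, true) → f a ⟨i, hi⟩ = ⟨i + 1, hi1⟩)
    (hdn : ∀ (a : α) (i : ℕ) (hi : i < L.reverse.length + 1) (hi1 : i + 1 < L.reverse.length + 1),
        L.reverse[i]? = some (a, false) → f a ⟨i + 1, hi1⟩ = ⟨i, hi⟩) :
    ∀ m k, (hk : k + m = L.length) →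
      (FreeGroup.lift f) (FreeGroup.mk (L.drop k)) ⟨0, Nat.succ_pos _⟩
        = ⟨m, by rw [List.length_reverse]; omega⟩ := by
  intro m
  induction m with
  | zero =>
    intro k hk
    rw [List.drop_eq_nil_of_le (by omega : L.length ≤ k)]
    show (FreeGroup.lift f) (FreeGroup.mk []) _ = _
    rw [← FreeGroup.one_eq_mk, map_one]
    rfl
  | succ m ih =>
    intro k hk
    have hkl : k < L.length := by omega
    have hdrop : L.drop k = L[k] :: L.drop (k + 1) := List.drop_eq_getElem_cons hkl
    have hrev : L.reverse[m]? = some L[k] := by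
      rw [List.getElem?_reverse (by omega)]
      rw [show L.length - 1 - m = k by omega]
      exact (List.getElem?_eq_getElem hkl)
    rw [hdrop, ← List.singleton_append, ← FreeGroup.mul_mk, map_mul]
    have ihk := ih (k + 1) (by omega)
    show (FreeGroup.lift f) (FreeGroup.mk [L[k]])
        ((FreeGroup.lift f) (FreeGroup.mk (L.drop (k + 1))) ⟨0, Nat.succ_pos _⟩) = _
    rw [ihk]
    rcases hLk : L[k] with ⟨x, b⟩
    rw [hLk] at hrev
    cases b
    · -- letter (x, false) : apply (f x)⁻¹
      have h1 : FreeGroup.mk [(x, false)] = (FreeGroup.of x)⁻¹ := by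
        rw [show FreeGroup.of x = FreeGroup.mk [(x, true)] from rfl, FreeGroup.inv_mk]
        rfl
      rw [h1, map_inv, FreeGroup.lift_apply_of]
      rw [← hdn x m (by rw [List.length_reverse]; omega) (by rw [List.length_reverse]; omega) hrev,
        Equiv.Perm.inv_def, Equiv.symm_apply_apply]
    · have : FreeGroup.mk [(x, true)] = FreeGroup.of x := rfl
      rw [this, FreeGroup.lift_apply_of]
      exact hup x m (by rw [List.length_reverse]; omega) (by rw [List.length_reverse]; omega) hrev



theorem freeGroup_rf {α : Type*} (w : FreeGroup α) (hw : w ≠ 1) :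
    ∃ (Q : Type) (_ : Group Q) (_ : Finite Q) (π : FreeGroup α →* Q), π w ≠ 1 := by
  classical
  set L := w.toWord with hL
  have hM : ∀ (i : ℕ) (x : α) (b : Bool),
      L.reverse[i]? = some (x, b) → L.reverse[i + 1]? = some (x, !b) → False :=
    fun i x b h1 h2 => rev_no_adj w h1 h2
  obtain ⟨f, hup, hdn⟩ := exists_perm L.reverse (by simpa using hM)
  refine ⟨Equiv.Perm (Fin (L.reverse.length + 1)), inferInstance, inferInstance,
    FreeGroup.lift f, ?_⟩
  have hkey := key_eval L f hup hdn L.length 0 (by omega)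
  rw [List.drop_zero] at hkey
  have hmkw : FreeGroup.mk L = w := FreeGroup.mk_toWord
  rw [hmkw] at hkey
  intro hone
  rw [hone] at hkey
  have h0 : (0 : ℕ) = L.length := by
    have := congrArg Fin.val hkey
    simpa using this
  have : L ≠ [] := fun hnil => hw (FreeGroup.toWord_eq_nil_iff.mp (hL ▸ hnil))
  exact this (List.eq_nil_of_length_eq_zero h0.symm)

theorem rf {G : Type*} [Group G] [IsFreeGroup G] {w : G} (hw : w ≠ 1) :
    ∃ (Q : Type) (_ : Group Q) (_ : Finite Q) (π : G →* Q), π w ≠ 1 := by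
  set e := IsFreeGroup.toFreeGroup G
  have hew : e w ≠ 1 := fun h => hw (by
    have := congrArg e.symm h
    simpa using this)
  obtain ⟨Q, _, _, π, hπ⟩ := freeGroup_rf (e w) hew
  exact ⟨Q, ‹_›, ‹_›, π.comp e.toMonoidHom, hπ⟩
lemma finite_homs {G Q : Type*} [Group G] [Group.FG G] [Group Q] [Finite Q] :
    Finite (G →* Q) := by
  classical
  obtain ⟨S, -, hS⟩ := Group.rank_spec G
  have hinj : Injective (fun (f : G →* Q) => (fun s : {x // x ∈ S} => f s.1)) := by
    intro f g h
    ext x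
    have hx : x ∈ Subgroup.closure (S : Set G) := hS ▸ Subgroup.mem_top x
    induction hx using Subgroup.closure_induction with
    | mem y hy => exact congrFun h ⟨y, hy⟩
    | one => rw [map_one, map_one]
    | mul a b _ _ ha hb => rw [map_mul, map_mul, ha, hb]
    | inv a _ ha => rw [map_inv, map_inv, ha]
  exact Finite.of_injective _ hinj

theorem hopf {G : Type*} [Group G] [IsFreeGroup G] [Group.FG G] {α : G →* G}
    (hs : Surjective α) : Injective α := by
  rw [← MonoidHom.ker_eq_bot_iff]
  rw [Subgroup.eq_bot_iff_forall]
  intro w hw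
  by_contra hne
  obtain ⟨Q, _, _, π, hπ⟩ := rf hne
  haveI : Finite (G →* Q) := finite_homs
  have hTinj : Injective (fun (f : G →* Q) => f.comp α) := by
    intro f g h
    exact (MonoidHom.cancel_right hs).mp h
  obtain ⟨f, hf⟩ := (Finite.injective_iff_surjective.mp hTinj) π
  apply hπ
  have hfw : π w = f (α w) := by rw [← hf]; rfl
  rw [hfw, MonoidHom.mem_ker.mp hw, map_one]

universe u

lemma mk_le_rank {G ι : Type u} [Group G] [Group.FG G] (b : FreeGroupBasis ι G) :
    Cardinal.mk ι ≤ (Group.rank G : Cardinal) := by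
  classical
  obtain ⟨S, hcard, hS⟩ := Group.rank_spec G
  set V := ι →₀ ZMod 2 with hV
  set ψ : G →* Multiplicative V := b.lift (fun i => Multiplicative.ofAdd (Finsupp.single i 1))
    with hψ
  set s : Set V := (fun g => Multiplicative.toAdd (ψ g)) '' (S : Set G) with hs
  set W : Submodule (ZMod 2) V := Submodule.span (ZMod 2) s with hW
  have hall : ∀ g : G, Multiplicative.toAdd (ψ g) ∈ W := by
    intro g
    have hle : Subgroup.closure (S : Set G)
        ≤ Subgroup.comap ψ (AddSubgroup.toSubgroup (W.toAddSubgroup)) := by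
      rw [Subgroup.closure_le]
      intro x hx
      exact Submodule.subset_span ⟨x, hx, rfl⟩
    rw [hS] at hle
    exact hle (Subgroup.mem_top g)
  have hψb : ∀ i : ι, ψ (b i) = Multiplicative.ofAdd (Finsupp.single i 1) := by
    intro i
    rw [hψ]
    show (FreeGroup.lift _) (b.repr (b i)) = _
    rw [b.repr_apply_coe, FreeGroup.lift_apply_of]
  have hWtop : W = ⊤ := by
    rw [eq_top_iff, ← (Finsupp.basisSingleOne (R := ZMod 2) (ι := ι)).span_eq, Submodule.span_le]
    rintro v ⟨i, rfl⟩
    have hbi : (Finsupp.basisSingleOne (R := ZMod 2) (ι := ι)) i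
        = Multiplicative.toAdd (ψ (b i)) := by
      rw [hψb i, Finsupp.coe_basisSingleOne]
      rfl
    rw [hbi]
    exact hall _
  have h1 : Module.rank (ZMod 2) V ≤ Cardinal.mk s := by
    have := rank_span_le (R := ZMod 2) (M := V) s
    rw [← hW, hWtop] at this
    rwa [rank_top] at this
  have h2 : (Cardinal.mk ι : Cardinal) ≤ Module.rank (ZMod 2) V := by
    have hr : Module.rank (ZMod 2) V = Cardinal.lift.{0} (Cardinal.mk ι) :=
      rank_finsupp_self (ZMod 2) ι
    rw [hr, Cardinal.lift_uzero]
  have h3 : Cardinal.mk s ≤ (S.card : Cardinal) := by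
    rw [hs]
    calc Cardinal.mk ((fun g => Multiplicative.toAdd (ψ g)) '' (S : Set G))
        ≤ Cardinal.mk (S : Set G) := Cardinal.mk_image_le
      _ = (S.card : Cardinal) := Cardinal.mk_coe_finset
  calc Cardinal.mk ι ≤ Module.rank (ZMod 2) V := h2
    _ ≤ Cardinal.mk s := h1
    _ ≤ (S.card : Cardinal) := h3
    _ = (Group.rank G : Cardinal) := by rw [hcard]

lemma basis_finite {G ι : Type u} [Group G] [Group.FG G] (b : FreeGroupBasis ι G) :
    Finite ι := by
  have h := mk_le_rank b
  have : Cardinal.mk ι < Cardinal.aleph0 := lt_of_le_of_lt h (Cardinal.nat_lt_aleph0 _)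
  exact Cardinal.lt_aleph0_iff_finite.mp this

lemma closure_basis_range {G ι : Type u} [Group G] (b : FreeGroupBasis ι G) :
    Subgroup.closure (Set.range ⇑b) = ⊤ := by
  have hr : Set.range ⇑b
      = ⇑(b.repr.symm : FreeGroup ι →* G) '' Set.range (FreeGroup.of (α := ι)) := by
    rw [← Set.range_comp]
    rfl
  rw [hr, ← MonoidHom.map_closure, FreeGroup.closure_range_of]
  exact Subgroup.map_top_of_surjective _ b.repr.symm.surjective

lemma rank_eq_card {G ι : Type u} [Group G] [Group.FG G] (b : FreeGroupBasis ι G) :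
    Group.rank G = Nat.card ι := by
  have hfin : Finite ι := basis_finite b
  haveI := Fintype.ofFinite ι
  classical
  apply le_antisymm
  · have hcl : Subgroup.closure ((Finset.image ⇑b Finset.univ : Finset G) : Set G) = ⊤ := by
      rw [Finset.coe_image, Finset.coe_univ, Set.image_univ]
      exact closure_basis_range b
    calc Group.rank G ≤ (Finset.image ⇑b Finset.univ).card := Group.rank_le hcl
      _ ≤ Finset.univ.card := Finset.card_image_le
      _ = Nat.card ι := by rw [Finset.card_univ, Nat.card_eq_fintype_card]
  · have h := mk_le_rank b
    have hcast : ((Nat.card ι : ℕ) : Cardinal) = Cardinal.mk ι := by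
      show ((Cardinal.toNat (Cardinal.mk ι) : ℕ) : Cardinal) = Cardinal.mk ι
      exact Cardinal.cast_toNat_of_lt_aleph0 (Cardinal.lt_aleph0_iff_finite.mpr hfin)
    have : ((Nat.card ι : ℕ) : Cardinal) ≤ ((Group.rank G : ℕ) : Cardinal) := by
      rw [hcast]; exact h
    exact_mod_cast this

lemma iso_of_rank_eq {G H : Type u} [Group G] [Group H] [IsFreeGroup G] [IsFreeGroup H]
    [Group.FG G] [Group.FG H] (h : Group.rank G = Group.rank H) : Nonempty (G ≃* H) := by
  classical
  set bG : FreeGroupBasis (IsFreeGroup.Generators G) G :=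
    FreeGroupBasis.ofRepr (IsFreeGroup.toFreeGroup G)
  set bH : FreeGroupBasis (IsFreeGroup.Generators H) H :=
    FreeGroupBasis.ofRepr (IsFreeGroup.toFreeGroup H)
  have hfG : Finite (IsFreeGroup.Generators G) := basis_finite bG
  have hfH : Finite (IsFreeGroup.Generators H) := basis_finite bH
  haveI := Fintype.ofFinite (IsFreeGroup.Generators G)
  haveI := Fintype.ofFinite (IsFreeGroup.Generators H)
  have hcard : Fintype.card (IsFreeGroup.Generators G)
      = Fintype.card (IsFreeGroup.Generators H) := by
    rw [← Nat.card_eq_fintype_card, ← Nat.card_eq_fintype_card,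
      ← rank_eq_card bG, ← rank_eq_card bH]
    exact h
  obtain e := Fintype.equivOfCardEq hcard
  exact ⟨(IsFreeGroup.toFreeGroup G).trans
    ((FreeGroup.freeGroupCongr e).trans (IsFreeGroup.toFreeGroup H).symm)⟩

lemma inj_of_surjective_rank_eq {G H : Type u} [Group G] [Group H]
    [IsFreeGroup G] [IsFreeGroup H] [Group.FG G] [Group.FG H]
    (ψ : G →* H) (hs : Function.Surjective ψ) (h : Group.rank G = Group.rank H) :
    Function.Injective ψ := by
  obtain ⟨e⟩ := iso_of_rank_eq h.symm
  have hinj : Function.Injective (e.toMonoidHom.comp ψ) :=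
    hopf (e.surjective.comp hs)
  intro x y hxy
  exact hinj (by simp [MonoidHom.comp_apply, hxy])

end StabAux

open StabAux in
theorem stmt_0 (F : Type*) [Group F] [IsFreeGroup F] [Group.FG F] (φ : Monoid.End F) :
    ∃ K : ℕ, 0 < K ∧ (∀ k : ℕ, K ≤ k → MonoidHom.ker (φ ^ k) = MonoidHom.ker (φ ^ K)) ∧
      (⨆ k ≥ 1, MonoidHom.ker (φ ^ k)) = MonoidHom.ker (φ ^ K) := by
  classical
  have hcomp : ∀ (k : ℕ) (x : F), (φ ^ (k + 1)) x = φ ((φ ^ k) x) := by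
    intro k x
    rw [pow_succ']
    rfl
  -- the rank sequence of the images
  let d : ℕ → ℕ := fun k => Group.rank ↥((φ ^ k : F →* F).range)
  have hmem : ∀ (k : ℕ) (g : F), g ∈ (φ ^ k : F →* F).range → φ g ∈ (φ ^ (k+1) : F →* F).range := by
    rintro k g ⟨x, rfl⟩
    exact ⟨x, hcomp k x⟩
  let ρ : ∀ k : ℕ, ↥((φ ^ k : F →* F).range) →* ↥((φ ^ (k+1) : F →* F).range) := fun k =>
    MonoidHom.codRestrict ((φ : F →* F).domRestrict (φ ^ k : F →* F).range) _
      (fun g => hmem k g.1 g.2)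
  have hρ_apply : ∀ (k : ℕ) (g : ↥((φ ^ k : F →* F).range)), ((ρ k) g : F) = φ g.1 :=
    fun k g => rfl
  have hρs : ∀ k, Function.Surjective (ρ k) := by
    rintro k ⟨y, x, rfl⟩
    exact ⟨⟨(φ ^ k) x, ⟨x, rfl⟩⟩,
      Subtype.ext (show φ ((φ ^ k) x) = (φ ^ (k + 1)) x from (hcomp k x).symm)⟩
  have hd : ∀ k, d (k + 1) ≤ d k := fun k => Group.rank_le_of_surjective (ρ k) (hρs k)
  have hanti : ∀ j k, j ≤ k → d k ≤ d j := by
    intro j k hjk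
    induction k with
    | zero => rw [Nat.le_zero.mp hjk]
    | succ k ih =>
      rcases Nat.lt_or_ge j (k+1) with hlt | hge
      · exact le_trans (hd k) (ih (by omega))
      · rw [show j = k + 1 by omega]
  -- eventual stabilization of the rank sequence
  obtain ⟨K0, hK0⟩ : ∃ K, ∀ k, K ≤ k → d k = d K := by
    have hne : (Set.range d).Nonempty := ⟨d 0, 0, rfl⟩
    obtain ⟨K, hK⟩ := Nat.sInf_mem hne
    refine ⟨K, fun k hk => le_antisymm (hanti K k hk) ?_⟩
    rw [hK]
    exact Nat.sInf_le ⟨k, rfl⟩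
  -- kernels stabilize from K0 on
  have hker_succ : ∀ k, K0 ≤ k → MonoidHom.ker (φ ^ (k+1)) = MonoidHom.ker (φ ^ k) := by
    intro k hk
    have hrank : Group.rank ↥((φ ^ k : F →* F).range)
        = Group.rank ↥((φ ^ (k+1) : F →* F).range) := by
      show d k = d (k + 1)
      rw [hK0 k hk, hK0 (k+1) (by omega)]
    have hinj : Function.Injective (ρ k) :=
      inj_of_surjective_rank_eq (ρ k) (hρs k) hrank
    ext x
    constructor
    · intro hx
      have hx1 : φ ((φ ^ k) x) = 1 := by
        rw [← hcomp k x]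
        exact hx
      have h1 : (ρ k) ⟨(φ ^ k) x, ⟨x, rfl⟩⟩ = (ρ k) 1 := by
        apply Subtype.ext
        rw [hρ_apply, hρ_apply]
        show φ ((φ ^ k) x) = φ ((1 : ↥((φ ^ k : F →* F).range)) : F)
        rw [hx1, OneMemClass.coe_one, map_one]
      have h2 := hinj h1
      have h3 : (φ ^ k) x = 1 := by
        have := congrArg (fun z : ↥((φ ^ k : F →* F).range) => (z : F)) h2
        simpa using this
      exact h3
    · intro hx
      show (φ ^ (k+1)) x = 1
      rw [hcomp k x, show (φ ^ k) x = 1 from hx, map_one]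
  have hmono : ∀ j k, j ≤ k → MonoidHom.ker (φ ^ j) ≤ MonoidHom.ker (φ ^ k) := by
    intro j k hjk
    induction k with
    | zero =>
      rw [show j = 0 by omega]
    | succ k ih =>
      rcases Nat.lt_or_ge j (k+1) with hlt | hge
      · refine le_trans (ih (by omega)) ?_
        intro x hx
        show (φ ^ (k+1)) x = 1
        rw [hcomp k x, show (φ ^ k) x = 1 from hx, map_one]
      · rw [show j = k + 1 by omega]
  have hstab : ∀ k, K0 + 1 ≤ k → MonoidHom.ker (φ ^ k) = MonoidHom.ker (φ ^ (K0 + 1)) := by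
    intro k hk
    induction k, hk using Nat.le_induction with
    | base => rfl
    | succ k hk ih => rw [hker_succ k (by omega), ih]
  refine ⟨K0 + 1, Nat.succ_pos _, hstab, ?_⟩
  apply le_antisymm
  · apply iSup₂_le
    intro k hk
    rcases Nat.lt_or_ge k (K0 + 1) with hlt | hge
    · exact hmono k (K0 + 1) (by omega)
    · exact (hstab k hge).le
  · have := le_iSup₂ (f := fun (k : ℕ) (_ : 1 ≤ k) => MonoidHom.ker (φ ^ k)) (K0 + 1)
      (by omega : 1 ≤ K0 + 1)
    exact this
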